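/- Let M be an infinite matrix with no vanishing columns and p ≥ 1. Then the normed space (ℓ^p_M, ‖·‖_{M,p}) is complete, i.e., every Cauchy sequence in ℓ^p_M converges in ℓ^p_M. -/

import Mathlib

open scoped ENNReal NNReal
open Filter MeasureTheory

section Aux

private lemma liminf_rpow_aux (u : ℕ → ℝ≥0∞) {q : ℝ} (hq : 0 < q) :
    (liminf u atTop) ^ q = liminf (fun j => (u j) ^ q) atTop := by
  have := (ENNReal.monotone_rpow_of_nonneg hq.le).map_liminf_of_continuousAt (F := atTop) u
    (ENNReal.continuous_rpow_const.continuousAt)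
  exact this

private lemma tsum_liminf_le_aux (f : ℕ → ℕ → ℝ≥0∞) :
    ∑' k, liminf (fun j => f j k) atTop ≤ liminf (fun j => ∑' k, f j k) atTop := by
  simp_rw [← MeasureTheory.lintegral_count]
  exact lintegral_liminf_le (fun j => measurable_of_countable _)

private lemma Lp_add_le_aux (A B : ℕ → ℝ≥0∞) {p : ℝ} (hp : 1 ≤ p) :
    (∑' n, (A n + B n) ^ p) ^ (1/p) ≤ (∑' n, A n ^ p) ^ (1/p) + (∑' n, B n ^ p) ^ (1/p) := by
  simp_rw [← MeasureTheory.lintegral_count]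
  exact ENNReal.lintegral_Lp_add_le (measurable_of_countable _).aemeasurable
    (measurable_of_countable _).aemeasurable hp

end Aux

noncomputable def eNorm (m : ℕ → ℕ → ℂ) (p : ℝ) (x : ℕ → ℂ) : ℝ≥0∞ :=
  (∑' n : ℕ, (∑' k : ℕ, (‖m n k‖₊ : ℝ≥0∞) * (‖x k‖₊ : ℝ≥0∞)) ^ p) ^ (1 / p)

section Aux2

/-- the eNorm with a general nonnegative weight function -/
private noncomputable def Lw (m : ℕ → ℕ → ℂ) (p : ℝ) (u : ℕ → ℝ≥0∞) : ℝ≥0∞ :=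
  (∑' n : ℕ, (∑' k : ℕ, (‖m n k‖₊ : ℝ≥0∞) * u k) ^ p) ^ (1 / p)

private lemma eNorm_eq_Lw (m : ℕ → ℕ → ℂ) (p : ℝ) (x : ℕ → ℂ) :
    eNorm m p x = Lw m p (fun k => (‖x k‖₊ : ℝ≥0∞)) := rfl

private lemma Lw_mono (m : ℕ → ℕ → ℂ) {p : ℝ} (hp : 0 < p) {u v : ℕ → ℝ≥0∞}
    (h : ∀ k, u k ≤ v k) : Lw m p u ≤ Lw m p v := by
  refine ENNReal.rpow_le_rpow (ENNReal.tsum_le_tsum fun n => ?_) (by positivity)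
  exact ENNReal.rpow_le_rpow (ENNReal.tsum_le_tsum fun k =>
    mul_le_mul_right (h k) _) hp.le

private lemma Lw_add_le (m : ℕ → ℕ → ℂ) {p : ℝ} (hp : 1 ≤ p) (u v : ℕ → ℝ≥0∞) :
    Lw m p (u + v) ≤ Lw m p u + Lw m p v := by
  have h : ∀ n, (∑' k, (‖m n k‖₊ : ℝ≥0∞) * (u + v) k)
      = (∑' k, (‖m n k‖₊ : ℝ≥0∞) * u k) + ∑' k, (‖m n k‖₊ : ℝ≥0∞) * v k := by
    intro n
    rw [← ENNReal.tsum_add]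
    exact tsum_congr fun k => by simp [Pi.add_apply, mul_add]
  unfold Lw
  simp_rw [h]
  exact Lp_add_le_aux _ _ hp

private lemma term_le_eNorm (m : ℕ → ℕ → ℂ) {p : ℝ} (hp : 0 < p) (x : ℕ → ℂ) (n k : ℕ) :
    (‖m n k‖₊ : ℝ≥0∞) * (‖x k‖₊ : ℝ≥0∞) ≤ eNorm m p x := by
  set a : ℕ → ℝ≥0∞ := fun n => ∑' k, (‖m n k‖₊ : ℝ≥0∞) * (‖x k‖₊ : ℝ≥0∞) with ha
  have h1 : (‖m n k‖₊ : ℝ≥0∞) * (‖x k‖₊ : ℝ≥0∞) ≤ a n := ENNReal.le_tsum k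
  have h2 : a n ≤ eNorm m p x := by
    have h3 : (a n) ^ p ≤ ∑' n, (a n) ^ p := ENNReal.le_tsum n
    have h4 : a n = ((a n) ^ p) ^ (1/p) := by
      rw [← ENNReal.rpow_mul, mul_one_div_cancel hp.ne', ENNReal.rpow_one]
    rw [h4]
    exact ENNReal.rpow_le_rpow h3 (by positivity)
  exact h1.trans h2

end Aux2

/-- `(ℓ^p_M, ‖·‖_{M,p})` is complete: every Cauchy sequence in `ℓ^p_M` converges
to an element of `ℓ^p_M` in the norm `‖·‖_{M,p}`. -/
theorem stmt1 (m : ℕ → ℕ → ℂ) (p : ℝ) (hp : 1 ≤ p)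
    (hcol : ∀ k : ℕ, ∃ n : ℕ, m n k ≠ 0)
    (x : ℕ → ℕ → ℂ) (hx : ∀ i, eNorm m p (x i) < ∞)
    (hcauchy : ∀ ε : ℝ≥0∞, 0 < ε → ∃ N : ℕ, ∀ i j, N ≤ i → N ≤ j →
      eNorm m p (x i - x j) < ε) :
    ∃ y : ℕ → ℂ, eNorm m p y < ∞ ∧
      ∀ ε : ℝ≥0∞, 0 < ε → ∃ N : ℕ, ∀ i, N ≤ i → eNorm m p (x i - y) < ε := by
  have hp0 : (0:ℝ) < p := lt_of_lt_of_le zero_lt_one hp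
  -- Step 1: coordinatewise Cauchy, hence coordinatewise limit y
  have hCk : ∀ k, CauchySeq (fun i => x i k) := by
    intro k
    obtain ⟨n, hn⟩ := hcol k
    have hc0 : (0:ℝ≥0∞) < (‖m n k‖₊ : ℝ≥0∞) := by
      simpa using hn
    rw [Metric.cauchySeq_iff]
    intro δ hδ
    obtain ⟨N, hN⟩ := hcauchy ((‖m n k‖₊ : ℝ≥0∞) * ENNReal.ofReal δ)
      (ENNReal.mul_pos hc0.ne' (ENNReal.ofReal_pos.mpr hδ).ne')
    refine ⟨N, fun i hi j hj => ?_⟩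
    have h1 : (‖m n k‖₊ : ℝ≥0∞) * (‖(x i - x j) k‖₊ : ℝ≥0∞)
        < (‖m n k‖₊ : ℝ≥0∞) * ENNReal.ofReal δ :=
      lt_of_le_of_lt (term_le_eNorm m hp0 _ n k) (hN i j hi hj)
    have h2 : (‖(x i - x j) k‖₊ : ℝ≥0∞) < ENNReal.ofReal δ :=
      (ENNReal.mul_lt_mul_iff_right hc0.ne' ENNReal.coe_ne_top).mp h1
    have h3 : edist (x i k) (x j k) < ENNReal.ofReal δ := by
      rw [edist_eq_enorm_sub]
      exact h2
    rw [edist_lt_ofReal] at h3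
    exact h3
  choose y hy using fun k => cauchySeq_tendsto_of_complete (hCk k)
  -- Key Fatou estimate
  have key : ∀ i : ℕ, eNorm m p (x i - y) ≤
      liminf (fun j => eNorm m p (x i - x j)) atTop := by
    intro i
    set A : ℕ → ℕ → ℝ≥0∞ := fun j n => ∑' k, (‖m n k‖₊ : ℝ≥0∞) * (‖x i k - x j k‖₊ : ℝ≥0∞)
      with hA
    set Ainf : ℕ → ℝ≥0∞ := fun n => ∑' k, (‖m n k‖₊ : ℝ≥0∞) * (‖x i k - y k‖₊ : ℝ≥0∞)
      with hAinf
    have h1 : ∀ n, Ainf n ≤ liminf (fun j => A j n) atTop := by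
      intro n
      have hterm : ∀ k, Tendsto (fun j => (‖m n k‖₊ : ℝ≥0∞) * (‖x i k - x j k‖₊ : ℝ≥0∞))
          atTop (nhds ((‖m n k‖₊ : ℝ≥0∞) * (‖x i k - y k‖₊ : ℝ≥0∞))) := by
        intro k
        have h5 : Tendsto (fun j => edist (x i k) (x j k)) atTop
            (nhds (edist (x i k) (y k))) :=
          (tendsto_const_nhds (x := x i k)).edist (hy k)
        simp_rw [edist_eq_enorm_sub] at h5
        exact ENNReal.Tendsto.const_mul h5 (Or.inr ENNReal.coe_ne_top)
      have h6 : Ainf n = ∑' k, liminf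
          (fun j => (‖m n k‖₊ : ℝ≥0∞) * (‖x i k - x j k‖₊ : ℝ≥0∞)) atTop :=
        tsum_congr fun k => ((hterm k).liminf_eq).symm
      rw [h6]
      exact tsum_liminf_le_aux _
    have h2 : ∀ n, (Ainf n) ^ p ≤ liminf (fun j => (A j n) ^ p) atTop := by
      intro n
      calc (Ainf n) ^ p ≤ (liminf (fun j => A j n) atTop) ^ p :=
            ENNReal.rpow_le_rpow (h1 n) hp0.le
        _ = liminf (fun j => (A j n) ^ p) atTop := liminf_rpow_aux _ hp0
    have h3 : ∑' n, (Ainf n) ^ p ≤ liminf (fun j => ∑' n, (A j n) ^ p) atTop :=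
      le_trans (ENNReal.tsum_le_tsum h2) (tsum_liminf_le_aux _)
    have h4 : eNorm m p (x i - y) = (∑' n, (Ainf n) ^ p) ^ (1/p) := rfl
    rw [h4]
    calc (∑' n, (Ainf n) ^ p) ^ (1/p)
        ≤ (liminf (fun j => ∑' n, (A j n) ^ p) atTop) ^ (1/p) :=
          ENNReal.rpow_le_rpow h3 (by positivity)
      _ = liminf (fun j => (∑' n, (A j n) ^ p) ^ (1/p)) atTop :=
          liminf_rpow_aux _ (by positivity)
      _ = liminf (fun j => eNorm m p (x i - x j)) atTop := rfl
  -- a bound from the Cauchy property: for ε' > 0, eventually eNorm(x i - y) ≤ ε'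
  have main : ∀ ε' : ℝ≥0∞, 0 < ε' → ε' ≠ ∞ →
      ∃ N : ℕ, ∀ i, N ≤ i → eNorm m p (x i - y) ≤ ε' := by
    intro ε' hε' hε'top
    obtain ⟨N, hN⟩ := hcauchy ε' hε'
    refine ⟨N, fun i hi => ?_⟩
    refine (key i).trans ?_
    refine liminf_le_of_frequently_le' ?_
    exact ((eventually_ge_atTop N).mono fun j hj => (hN i j hi hj).le).frequently
  -- finiteness of eNorm y
  obtain ⟨N₀, hN₀⟩ := main 1 one_pos ENNReal.one_ne_top
  have hyfin : eNorm m p y < ∞ := by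
    have hbound : ∀ k, (‖y k‖₊ : ℝ≥0∞) ≤ (‖x N₀ k - y k‖₊ : ℝ≥0∞) + (‖x N₀ k‖₊ : ℝ≥0∞) := by
      intro k
      have : ‖y k‖₊ ≤ ‖x N₀ k - y k‖₊ + ‖x N₀ k‖₊ := by
        have := nnnorm_add_le (x N₀ k - y k) (x N₀ k)
        calc ‖y k‖₊ = ‖-(x N₀ k - y k) + x N₀ k‖₊ := by ring_nf
          _ ≤ ‖-(x N₀ k - y k)‖₊ + ‖x N₀ k‖₊ := nnnorm_add_le _ _
          _ = ‖x N₀ k - y k‖₊ + ‖x N₀ k‖₊ := by rw [nnnorm_neg]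
      exact_mod_cast this
    have h7 : eNorm m p y ≤ eNorm m p (x N₀ - y) + eNorm m p (x N₀) := by
      rw [eNorm_eq_Lw, eNorm_eq_Lw, eNorm_eq_Lw]
      calc Lw m p (fun k => (‖y k‖₊ : ℝ≥0∞))
          ≤ Lw m p ((fun k => (‖(x N₀ - y) k‖₊ : ℝ≥0∞)) + fun k => (‖x N₀ k‖₊ : ℝ≥0∞)) := by
            refine Lw_mono m hp0 fun k => ?_
            simpa [Pi.add_apply, Pi.sub_apply] using hbound k
        _ ≤ _ := Lw_add_le m hp _ _
    have h8 : eNorm m p (x N₀ - y) + eNorm m p (x N₀) < ∞ :=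
      ENNReal.add_lt_top.mpr ⟨lt_of_le_of_lt (hN₀ N₀ le_rfl) ENNReal.one_lt_top, hx N₀⟩
    exact lt_of_le_of_lt h7 h8
  refine ⟨y, hyfin, fun ε hε => ?_⟩
  obtain ⟨ε', hε'0, hε'ε⟩ := exists_between hε
  have hε'top : ε' ≠ ∞ := (hε'ε.trans_le le_top).ne
  obtain ⟨N, hN⟩ := main ε' hε'0 hε'top
  exact ⟨N, fun i hi => lt_of_le_of_lt (hN i hi) hε'ε⟩
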